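/- Let A be an n×n (0,1)-matrix whose row sums are d_1, d_2, …, d_n, with d_i ≥ 1 for all i. Then per(A) ≤ ∏_{i=1}^n (d_i!)^{1/d_i}, where the powers are real powers. -/

import Mathlib

open Finset Equiv

/-- The permanent of an `n × n` matrix: `per(A) = ∑_{σ ∈ S_n} ∏_i A i (σ i)`. -/
def permanent {n : ℕ} (A : Matrix (Fin n) (Fin n) ℕ) : ℕ :=
  ∑ σ : Equiv.Perm (Fin n), ∏ i, A i (σ i)

namespace BregmanAux

variable {n : ℕ}

/-- Extend a permutation of `Fin n` to `Fin (n+1)` sending `i ↦ j` and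
`i.succAbove x ↦ j.succAbove (τ x)`. -/
def extPerm (i j : Fin (n + 1)) (τ : Equiv.Perm (Fin n)) : Equiv.Perm (Fin (n + 1)) :=
  ((finSuccEquiv' i).trans τ.optionCongr).trans (finSuccEquiv' j).symm

lemma extPerm_self (i j : Fin (n + 1)) (τ : Equiv.Perm (Fin n)) : extPerm i j τ i = j := by
  simp [extPerm, finSuccEquiv'_at, finSuccEquiv'_symm_none]

lemma extPerm_succAbove (i j : Fin (n + 1)) (τ : Equiv.Perm (Fin n)) (x : Fin n) :
    extPerm i j τ (i.succAbove x) = j.succAbove (τ x) := by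
  simp [extPerm, finSuccEquiv'_succAbove, finSuccEquiv'_symm_some]

lemma extPerm_bijective (i : Fin (n + 1)) :
    Function.Bijective (fun q : Fin (n + 1) × Equiv.Perm (Fin n) => extPerm i q.1 q.2) := by
  rw [Fintype.bijective_iff_injective_and_card]
  constructor
  · rintro ⟨j, τ⟩ ⟨j', τ'⟩ h
    simp only at h
    have hj : j = j' := by
      have := congrArg (fun σ : Equiv.Perm (Fin (n + 1)) => σ i) h
      simpa [extPerm_self] using this
    subst hj
    have hτ : τ = τ' := by
      ext x
      have := congrArg (fun σ : Equiv.Perm (Fin (n + 1)) => σ (i.succAbove x)) h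
      simp only [extPerm_succAbove] at this
      exact congrArg Fin.val (Fin.succAbove_right_injective this)
    rw [hτ]
  · simp [Fintype.card_perm, Nat.factorial_succ]

lemma permanent_expand_row (A : Matrix (Fin (n + 1)) (Fin (n + 1)) ℕ) (i : Fin (n + 1)) :
    permanent A = ∑ j, A i j * permanent (A.submatrix i.succAbove j.succAbove) := by
  rw [permanent,
    ← Fintype.sum_bijective _ (extPerm_bijective i) _ (fun σ => ∏ x, A x (σ x)) (fun _ => rfl),
    Fintype.sum_prod_type]
  refine Finset.sum_congr rfl fun j _ => ?_
  rw [permanent, Finset.mul_sum]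
  refine Finset.sum_congr rfl fun τ _ => ?_
  dsimp only
  rw [Fin.prod_univ_succAbove (fun x => A x (extPerm i j τ x)) i]
  simp [extPerm_self, extPerm_succAbove, Matrix.submatrix_apply]

lemma permanent_transpose (A : Matrix (Fin n) (Fin n) ℕ) : permanent A.transpose = permanent A := by
  rw [permanent, permanent,
    ← Equiv.sum_comp (Equiv.inv (Equiv.Perm (Fin n))) (fun σ => ∏ x, A x (σ x))]
  refine Finset.sum_congr rfl fun σ _ => ?_
  rw [← Equiv.prod_comp σ (fun y => A y ((Equiv.inv (Equiv.Perm (Fin n)) σ) y))]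
  refine Finset.prod_congr rfl fun x _ => ?_
  simp [Matrix.transpose_apply]

lemma permanent_expand_col (A : Matrix (Fin (n + 1)) (Fin (n + 1)) ℕ) (j : Fin (n + 1)) :
    permanent A = ∑ i, A i j * permanent (A.submatrix i.succAbove j.succAbove) := by
  conv_lhs => rw [← permanent_transpose A, permanent_expand_row A.transpose j]
  refine Finset.sum_congr rfl fun i _ => ?_
  rw [Matrix.transpose_apply]
  congr 1
  rw [← permanent_transpose (A.submatrix i.succAbove j.succAbove)]
  rfl

lemma minor_rowsum (A : Matrix (Fin (n + 1)) (Fin (n + 1)) ℕ) (i j : Fin (n + 1)) (k : Fin n) :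
    ∑ j', A.submatrix i.succAbove j.succAbove k j'
      = (∑ y, A (i.succAbove k) y) - A (i.succAbove k) j := by
  have := Fin.sum_univ_succAbove (fun y => A (i.succAbove k) y) j
  simp only [Matrix.submatrix_apply]
  omega

lemma rowsum_pos (A : Matrix (Fin n) (Fin n) ℕ) (h : 0 < permanent A) (i : Fin n) :
    0 < ∑ j, A i j := by
  by_contra hc
  push_neg at hc
  have h0 : ∀ j, A i j = 0 := by
    intro j
    have := Finset.sum_eq_zero_iff.mp (Nat.le_zero.mp hc) j (Finset.mem_univ j)
    exact this
  have : permanent A = 0 := by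
    rw [permanent]
    refine Finset.sum_eq_zero fun σ _ => ?_
    exact Finset.prod_eq_zero (Finset.mem_univ i) (h0 (σ i))
  omega


noncomputable def L (m : ℕ) : ℝ := Real.log m.factorial / m

lemma L_zero : L 0 = 0 := by simp [L]

lemma mul_L (m : ℕ) : (m : ℝ) * L m = Real.log m.factorial := by
  cases m with
  | zero => simp [L]
  | succ k =>
    have : ((k + 1 : ℕ) : ℝ) ≠ 0 := by positivity
    unfold L
    field_simp

lemma log_add_L (m : ℕ) (hm : 1 ≤ m) :
    Real.log m + Real.log (m - 1).factorial = Real.log m.factorial := by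
  obtain ⟨k, rfl⟩ := Nat.exists_eq_add_of_le hm
  have h1 : (1 + k) - 1 = k := by omega
  have h2 : (1 + k).factorial = (1 + k) * k.factorial := by
    rw [Nat.add_comm 1 k, Nat.factorial_succ]
  rw [h1, h2, Nat.cast_mul, Real.log_mul (by positivity) (by positivity)]

lemma sum_mul_log_le {ι : Type*} (s : Finset ι) (b : ι → ℝ) (hb : ∀ k ∈ s, 0 ≤ b k)
    (hr : 0 < ∑ k ∈ s, b k) :
    (∑ k ∈ s, b k) * Real.log (∑ k ∈ s, b k) ≤
      (∑ k ∈ s, b k) * Real.log s.card + ∑ k ∈ s, b k * Real.log (b k) := by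
  have hs : s.Nonempty := by
    rcases s.eq_empty_or_nonempty with h | h
    · simp [h] at hr
    · exact h
  have hm : (0 : ℝ) < s.card := by exact_mod_cast hs.card_pos
  have J := Real.convexOn_mul_log.map_sum_le (t := s) (w := fun _ => (s.card : ℝ)⁻¹) (p := b)
    (fun i _ => by positivity) (by rw [Finset.sum_const, nsmul_eq_mul, mul_inv_cancel₀ hm.ne']) (fun i hi => hb i hi)
  simp only [smul_eq_mul, ← Finset.mul_sum] at J
  set r := ∑ k ∈ s, b k with hrdef
  set S := ∑ k ∈ s, b k * Real.log (b k) with hSdef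
  have hlog : Real.log ((s.card : ℝ)⁻¹ * r) = Real.log r - Real.log s.card := by
    rw [Real.log_mul (by positivity) hr.ne', Real.log_inv]; ring
  rw [hlog] at J
  calc r * Real.log r
      = (s.card : ℝ) * ((s.card : ℝ)⁻¹ * r * (Real.log r - Real.log s.card))
        + r * Real.log s.card := by field_simp; ring
    _ ≤ (s.card : ℝ) * ((s.card : ℝ)⁻¹ * S) + r * Real.log s.card := by nlinarith [J]
    _ = r * Real.log s.card + S := by field_simp; ring

lemma aggregate {n : ℕ} (r : ℝ) (hr : 0 < r)
    (a p c : Fin (n + 1) → Fin (n + 1) → ℝ) (d : Fin (n + 1) → ℕ)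
    (ha : ∀ i j, a i j = 0 ∨ a i j = 1)
    (hp : ∀ i j, 0 ≤ p i j)
    (hd1 : ∀ k, 1 ≤ d k) (hdle : ∀ k, d k ≤ n + 1)
    (hA : ∀ i, ∑ j, a i j = (d i : ℝ))
    (hR : ∀ i, ∑ j, a i j * p i j = r)
    (hC : ∀ j, ∑ i, a i j * p i j = r)
    (hc1 : ∀ k j, a k j = 1 → c k j = L (d k - 1))
    (hc0 : ∀ k j, a k j = 0 → c k j = L (d k))
    (hIH : ∀ i j, a i j * (p i j * Real.log (p i j)) ≤ a i j * p i j * ((∑ k, c k j) - c i j)) :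
    Real.log r ≤ ∑ k, L (d k) := by
  classical
  have hcards : ∀ i, (((univ.filter (fun j => a i j = 1)).card : ℝ)) = (d i : ℝ) := by
    intro i
    rw [← hA i, Finset.card_filter]
    push_cast
    exact (Finset.sum_congr rfl fun j _ => by rcases ha i j with h | h <;> simp [h]).symm
  have hcardn : ∀ i, (univ.filter (fun j => a i j = 1)).card = d i := by
    intro i; exact_mod_cast hcards i
  -- Step A: per-row Jensen inequality
  have stepA : ∀ i, r * Real.log r ≤
      r * Real.log (d i) + ∑ j, a i j * (p i j * Real.log (p i j)) := by
    intro i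
    have hsum : ∑ j ∈ univ.filter (fun j => a i j = 1), p i j = ∑ j, a i j * p i j := by
      rw [Finset.sum_filter]
      exact Finset.sum_congr rfl fun j _ => by rcases ha i j with h | h <;> simp [h]
    have hsum2 : ∑ j ∈ univ.filter (fun j => a i j = 1), p i j * Real.log (p i j)
        = ∑ j, a i j * (p i j * Real.log (p i j)) := by
      rw [Finset.sum_filter]
      exact Finset.sum_congr rfl fun j _ => by rcases ha i j with h | h <;> simp [h]
    have key := sum_mul_log_le (univ.filter (fun j => a i j = 1)) (p i)
      (fun k _ => hp i k) (by rw [hsum, hR i]; exact hr)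
    rw [hsum, hsum2, hR i, hcards i] at key
    exact key
  -- Step B: plug in the induction bound
  have stepAB : ∀ i, r * Real.log r ≤
      r * Real.log (d i) + ∑ j, a i j * p i j * ((∑ k, c k j) - c i j) := by
    intro i
    exact (stepA i).trans (add_le_add (le_refl _) (Finset.sum_le_sum fun j _ => hIH i j))
  -- Sum over all rows
  have total : (n + 1 : ℝ) * (r * Real.log r) ≤
      ∑ i, (r * Real.log (d i) + ∑ j, a i j * p i j * ((∑ k, c k j) - c i j)) := by
    have h : (n + 1 : ℝ) * (r * Real.log r) = ∑ _i : Fin (n + 1), r * Real.log r := by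
      rw [Finset.sum_const, Finset.card_univ, Fintype.card_fin, nsmul_eq_mul]; push_cast; ring
    rw [h]
    exact Finset.sum_le_sum fun i _ => stepAB i
  -- Evaluate the right-hand side
  have E1 : ∀ k, ∑ j, c k j = (d k : ℝ) * L (d k - 1) + ((n + 1 : ℝ) - d k) * L (d k) := by
    intro k
    rw [← Finset.sum_filter_add_sum_filter_not univ (fun j => a k j = 1) (c k)]
    have h1 : ∑ j ∈ univ.filter (fun j => a k j = 1), c k j = (d k : ℝ) * L (d k - 1) := by
      rw [Finset.sum_congr rfl (fun j hj => hc1 k j (Finset.mem_filter.mp hj).2),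
        Finset.sum_const, nsmul_eq_mul, hcards k]
    have hcompl : (univ.filter (fun j => ¬ a k j = 1)).card = (n + 1) - d k := by
      have h := Finset.card_filter_add_card_filter_not
        (s := (univ : Finset (Fin (n + 1)))) (p := fun j => a k j = 1)
      rw [hcardn k] at h
      simp only [Finset.card_univ, Fintype.card_fin] at h
      omega
    have h2 : ∑ j ∈ univ.filter (fun j => ¬ a k j = 1), c k j
        = ((n + 1 : ℝ) - d k) * L (d k) := by
      have hmem : ∀ j ∈ univ.filter (fun j => ¬ a k j = 1), c k j = L (d k) := by
        intro j hj
        rcases ha k j with h | h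
        · exact hc0 k j h
        · exact absurd h (Finset.mem_filter.mp hj).2
      rw [Finset.sum_congr rfl hmem, Finset.sum_const, nsmul_eq_mul, hcompl,
        Nat.cast_sub (hdle k)]
      push_cast
      ring
    rw [h1, h2]
  have E2 : ∀ k, ∑ j, a k j * p k j * c k j = L (d k - 1) * r := by
    intro k
    have h : ∀ j, a k j * p k j * c k j = L (d k - 1) * (a k j * p k j) := by
      intro j
      rcases ha k j with h | h
      · simp [h]
      · rw [hc1 k j h]; ring
    simp_rw [h]
    rw [← Finset.mul_sum, hR k]
  have rhs_eq : ∑ i, (r * Real.log (d i) + ∑ j, a i j * p i j * ((∑ k, c k j) - c i j))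
      = (n + 1 : ℝ) * (r * ∑ k, L (d k)) := by
    have e1 : ∀ i j, a i j * p i j * ((∑ k, c k j) - c i j)
        = a i j * p i j * (∑ k, c k j) - a i j * p i j * c i j := fun i j => by ring
    simp_rw [e1, Finset.sum_sub_distrib, Finset.sum_add_distrib]
    have hT1 : ∑ i, ∑ j, a i j * p i j * (∑ k, c k j) = ∑ k, (∑ j, c k j) * r := by
      rw [Finset.sum_comm]
      have h : ∀ j, ∑ i, a i j * p i j * (∑ k, c k j) = (∑ k, c k j) * r := by
        intro j
        rw [← Finset.sum_mul, hC j]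
        ring
      rw [Finset.sum_congr rfl fun j _ => h j]
      -- now : ∑ j, (∑ k, c k j) * r = ∑ k, (∑ j, c k j) * r
      rw [← Finset.sum_mul, ← Finset.sum_mul, Finset.sum_comm]
    rw [Finset.sum_sub_distrib, hT1]
    have hsum3 : ∑ i, ∑ j, a i j * p i j * c i j = ∑ k, L (d k - 1) * r :=
      Finset.sum_congr rfl fun k _ => E2 k
    have hsum4 : ∑ k, (∑ j, c k j) * r
        = ∑ k, ((d k : ℝ) * L (d k - 1) + ((n + 1 : ℝ) - d k) * L (d k)) * r :=
      Finset.sum_congr rfl fun k _ => by rw [E1 k]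
    rw [hsum3, hsum4]
    simp only [Finset.mul_sum]
    rw [← Finset.sum_sub_distrib, ← Finset.sum_add_distrib]
    refine Finset.sum_congr rfl fun k _ => ?_
    have e1 : ((d k : ℝ) - 1) * L (d k - 1) = Real.log ((d k - 1).factorial) := by
      have hcast : ((d k - 1 : ℕ) : ℝ) = (d k : ℝ) - 1 := by
        rw [Nat.cast_sub (hd1 k)]; norm_num
      rw [← hcast]
      exact mul_L (d k - 1)
    have e2 := log_add_L (d k) (hd1 k)
    have e3 := mul_L (d k)
    linear_combination r * e1 + r * e2 - r * e3
  rw [rhs_eq] at total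
  have hN : (0 : ℝ) < (n + 1 : ℝ) := by positivity
  have h1 : r * Real.log r ≤ r * ∑ k, L (d k) := (mul_le_mul_iff_right₀ hN).mp total
  exact (mul_le_mul_iff_right₀ hr).mp h1


theorem bregman_log : ∀ (n : ℕ) (A : Matrix (Fin n) (Fin n) ℕ),
    (∀ i j, A i j = 0 ∨ A i j = 1) → 0 < permanent A →
    Real.log (permanent A) ≤ ∑ i, L (∑ j, A i j) := by
  intro n
  induction n with
  | zero =>
    intro A _ _
    have h1 : permanent A = 1 := by simp [permanent]
    rw [h1]
    simp
  | succ n IH =>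
    intro A h01 hper
    have hr : (0 : ℝ) < (permanent A : ℝ) := by exact_mod_cast hper
    have hd1 : ∀ k, 1 ≤ ∑ j, A k j := fun k => rowsum_pos A hper k
    have hdle : ∀ k, (∑ j, A k j) ≤ n + 1 := by
      intro k
      calc ∑ j, A k j ≤ ∑ _j : Fin (n + 1), 1 :=
            Finset.sum_le_sum fun j _ => by rcases h01 k j with h | h <;> omega
        _ = n + 1 := by simp
    exact aggregate (permanent A : ℝ) hr
      (fun i j => (A i j : ℝ))
      (fun i j => (permanent (A.submatrix i.succAbove j.succAbove) : ℝ))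
      (fun k j => L ((∑ y, A k y) - A k j))
      (fun k => ∑ j, A k j)
      (fun i j => by rcases h01 i j with h | h <;> simp [h])
      (fun i j => by positivity)
      hd1 hdle
      (fun i => by push_cast; rfl)
      (fun i => by
        show ∑ j, (A i j : ℝ) * (permanent (A.submatrix i.succAbove j.succAbove) : ℝ)
          = (permanent A : ℝ)
        exact_mod_cast (permanent_expand_row A i).symm)
      (fun j => by
        show ∑ i, (A i j : ℝ) * (permanent (A.submatrix i.succAbove j.succAbove) : ℝ)
          = (permanent A : ℝ)
        exact_mod_cast (permanent_expand_col A j).symm)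
      (fun k j h => by
        have hb : (A k j : ℝ) = 1 := h
        have h' : A k j = 1 := by exact_mod_cast hb
        show L ((∑ y, A k y) - A k j) = L ((∑ y, A k y) - 1)
        rw [h'])
      (fun k j h => by
        have hb : (A k j : ℝ) = 0 := h
        have h' : A k j = 0 := by exact_mod_cast hb
        show L ((∑ y, A k y) - A k j) = L (∑ y, A k y)
        rw [h', Nat.sub_zero])
      (by
        intro i j
        rcases h01 i j with h | h
        · simp [h]
        · simp only [h, Nat.cast_one, one_mul]
          rcases Nat.eq_zero_or_pos (permanent (A.submatrix i.succAbove j.succAbove))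
            with h0 | hpos
          · simp [h0]
          · have hq : (0 : ℝ) < (permanent (A.submatrix i.succAbove j.succAbove) : ℝ) := by
              exact_mod_cast hpos
            have hlog := IH (A.submatrix i.succAbove j.succAbove) (fun x y => h01 _ _) hpos
            rw [Finset.sum_congr rfl (fun k' (_ : k' ∈ univ) => by
              rw [minor_rowsum A i j k'])] at hlog
            have hsucc := Fin.sum_univ_succAbove (fun k => L ((∑ y, A k y) - A k j)) i
            have hle : Real.log (permanent (A.submatrix i.succAbove j.succAbove) : ℝ)
                ≤ (∑ k, L ((∑ y, A k y) - A k j)) - L ((∑ y, A i y) - A i j) := by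
              rw [hsucc]
              simp only [add_sub_cancel_left]
              exact hlog
            have hfin := mul_le_mul_of_nonneg_left hle hq.le
            rw [h] at hfin
            exact hfin)

end BregmanAux

/-- **Brégman's theorem** (the Minc conjecture). If `A` is an `n × n` `(0,1)`-matrix with
row sums `d₁, …, d_n`, all positive, then `per(A) ≤ ∏_i (d_i!)^(1/d_i)`. -/
theorem bregman (n : ℕ) (A : Matrix (Fin n) (Fin n) ℕ)
    (h01 : ∀ i j, A i j = 0 ∨ A i j = 1)
    (d : Fin n → ℕ) (hd : ∀ i, d i = ∑ j, A i j) (hpos : ∀ i, 1 ≤ d i) :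
    (permanent A : ℝ) ≤ ∏ i, ((d i).factorial : ℝ) ^ ((1 : ℝ) / (d i : ℝ)) := by
  rcases Nat.eq_zero_or_pos (permanent A) with h0 | hpos'
  · rw [h0]
    push_cast
    refine Finset.prod_nonneg fun i _ => ?_
    positivity
  · have key := BregmanAux.bregman_log n A h01 hpos'
    have hr : (0 : ℝ) < (permanent A : ℝ) := by exact_mod_cast hpos'
    rw [← Real.exp_log hr]
    calc Real.exp (Real.log (permanent A : ℝ))
        ≤ Real.exp (∑ i, BregmanAux.L (∑ j, A i j)) := Real.exp_le_exp.mpr key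
      _ = ∏ i, ((d i).factorial : ℝ) ^ ((1 : ℝ) / (d i : ℝ)) := by
          rw [Real.exp_sum]
          refine Finset.prod_congr rfl fun i _ => ?_
          rw [Real.rpow_def_of_pos (by exact_mod_cast (d i).factorial_pos)]
          rw [BregmanAux.L, ← hd i]
          congr 1
          ring
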